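/- For every (b₁,b₂) ∈ B (with b₃ = (b₁b₂)^(−1)) one has b₁³b₂³ − 1 > 0 and b₁⁴b₂⁴ + b₁b₂ − b₁² − b₂² > 0, and consequently G^S₋(b₁,b₃,b₂) ≥ 0. Hence, whenever moreover G^S₊(b₁,b₃,b₂) ≥ 0 (i.e., (b₁,b₂) lies in the existence region B_{S₃} of the S₃ Riemann ellipsoids), both N^S₊(b₁,b₃,b₂) and N^S₋(b₁,b₃,b₂) are well-defined real numbers. -/
import Mathlib


open Real MeasureTheory

/-- `C₁(x,y,z) = 2πg ∫₀^∞ s·((s+x²)(s+y²)(s+z²))^(−3/2) ds`. -/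
noncomputable def riC1 (g x y z : ℝ) : ℝ :=
  2 * π * g * ∫ s in Set.Ioi (0:ℝ),
    s * ((s + x ^ 2) * (s + y ^ 2) * (s + z ^ 2)) ^ (-(3:ℝ)/2)

/-- `C₂(x,y,z) = 2πg ∫₀^∞ s²·((s+x²)(s+y²)(s+z²))^(−3/2) ds`. -/
noncomputable def riC2 (g x y z : ℝ) : ℝ :=
  2 * π * g * ∫ s in Set.Ioi (0:ℝ),
    s ^ 2 * ((s + x ^ 2) * (s + y ^ 2) * (s + z ^ 2)) ^ (-(3:ℝ)/2)

/-- `G^S₊(x,y,z)`. -/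
noncomputable def GSp (g x y z : ℝ) : ℝ :=
  ((x - z) ^ 4 / (x * z)) *
    ((x * y ^ 2 * z + (x ^ 2 * y ^ 2 - x ^ 2 * z ^ 2 + y ^ 2 * z ^ 2)) * riC1 g x y z
      + (x * z + y ^ 2) * riC2 g x y z)

/-- `G^S₋(x,y,z)`. -/
noncomputable def GSm (g x y z : ℝ) : ℝ :=
  ((x + z) ^ 4 / (x * z)) *
    ((x * y ^ 2 * z - (x ^ 2 * y ^ 2 - x ^ 2 * z ^ 2 + y ^ 2 * z ^ 2)) * riC1 g x y z
      + (x * z - y ^ 2) * riC2 g x y z)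

/-- `N^S₊(x,y,z) = ½(√G^S₊ + √G^S₋)`. -/
noncomputable def NSp (g x y z : ℝ) : ℝ :=
  (Real.sqrt (GSp g x y z) + Real.sqrt (GSm g x y z)) / 2

/-- `N^S₋(x,y,z) = ½(√G^S₊ − √G^S₋)`. -/
noncomputable def NSm (g x y z : ℝ) : ℝ :=
  (Real.sqrt (GSp g x y z) - Real.sqrt (GSm g x y z)) / 2

/-- Membership in `B = {(b₁,b₂) : b₁ > b₂ > b₁^(−1/2) > 0}`. -/
def memB (b1 b2 : ℝ) : Prop := b2 < b1 ∧ (Real.sqrt b1)⁻¹ < b2 ∧ 0 < (Real.sqrt b1)⁻¹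

lemma riC1_nonneg (g x y z : ℝ) (hg : 0 ≤ g) : 0 ≤ riC1 g x y z := by
  unfold riC1
  apply mul_nonneg (by positivity)
  apply setIntegral_nonneg measurableSet_Ioi
  intro s hs
  have hs0 : 0 < s := hs
  have : (0:ℝ) < (s + x ^ 2) * (s + y ^ 2) * (s + z ^ 2) := by positivity
  positivity

lemma riC2_nonneg (g x y z : ℝ) (hg : 0 ≤ g) : 0 ≤ riC2 g x y z := by
  unfold riC2
  apply mul_nonneg (by positivity)
  apply setIntegral_nonneg measurableSet_Ioi
  intro s hs
  have hs0 : 0 < s := hs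
  have : (0:ℝ) < (s + x ^ 2) * (s + y ^ 2) * (s + z ^ 2) := by positivity
  positivity

/-- On `B` (with `b₃ = (b₁b₂)⁻¹`) one has `b₁³b₂³ − 1 > 0` and
`b₁⁴b₂⁴ + b₁b₂ − b₁² − b₂² > 0`, hence `G^S₋(b₁,b₃,b₂) ≥ 0`; consequently on the existence
region `B_{S₃}` (where moreover `G^S₊(b₁,b₃,b₂) ≥ 0`) both `N^S₊(b₁,b₃,b₂)` and
`N^S₋(b₁,b₃,b₂)` are well defined. -/
theorem stmt_4 (g b1 b2 b3 : ℝ) (hg : 0 < g) (hB : memB b1 b2) (hb3 : b3 = (b1 * b2)⁻¹) :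
    0 < b1 ^ 3 * b2 ^ 3 - 1 ∧
    0 < b1 ^ 4 * b2 ^ 4 + b1 * b2 - b1 ^ 2 - b2 ^ 2 ∧
    0 ≤ GSm g b1 b3 b2 ∧
    (0 ≤ GSp g b1 b3 b2 →
      Real.sqrt (GSp g b1 b3 b2) ^ 2 = GSp g b1 b3 b2 ∧
      Real.sqrt (GSm g b1 b3 b2) ^ 2 = GSm g b1 b3 b2 ∧
      NSp g b1 b3 b2 + NSm g b1 b3 b2 = Real.sqrt (GSp g b1 b3 b2) ∧
      NSp g b1 b3 b2 - NSm g b1 b3 b2 = Real.sqrt (GSm g b1 b3 b2)) := by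
  obtain ⟨h12, h2b, h0⟩ := hB
  have hs1 : 0 < Real.sqrt b1 := inv_pos.mp h0
  have hb1 : 0 < b1 := Real.sqrt_pos.mp hs1
  have hb2 : 0 < b2 := h0.trans h2b
  have h1 : 1 < Real.sqrt b1 * b2 := by
    rw [← mul_inv_cancel₀ hs1.ne']
    exact mul_lt_mul_of_pos_left h2b hs1
  have hsq : Real.sqrt b1 * Real.sqrt b1 = b1 := Real.mul_self_sqrt hb1.le
  have hkey : 1 < b1 * b2 ^ 2 := by nlinarith [h1, hsq, hs1, hb2]
  have h3 : 1 < b1 ^ 2 * b2 := by nlinarith [hkey, h12, hb1, hb2]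
  have claim1 : 0 < b1 ^ 3 * b2 ^ 3 - 1 := by nlinarith [hkey, h3]
  have hA : 0 < b1 ^ 2 * ((b1 * b2 ^ 2) ^ 2 - 1) := by
    apply mul_pos (pow_pos hb1 2); nlinarith [hkey]
  have claim2 : 0 < b1 ^ 4 * b2 ^ 4 + b1 * b2 - b1 ^ 2 - b2 ^ 2 := by
    nlinarith [hA, mul_pos (sub_pos.mpr h12) hb2]
  subst hb3
  have ht : 0 < b1 * b2 := mul_pos hb1 hb2
  have htgt1 : 1 < b1 * b2 := by nlinarith [claim1, sq_nonneg (b1 * b2 - 1), sq_nonneg (b1 * b2 + 1), ht]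
  have hC1 : 0 ≤ riC1 g b1 ((b1 * b2)⁻¹) b2 := riC1_nonneg g _ _ _ hg.le
  have hC2 : 0 ≤ riC2 g b1 ((b1 * b2)⁻¹) b2 := riC2_nonneg g _ _ _ hg.le
  have hinv : (b1 * b2)⁻¹ < 1 := inv_lt_one_of_one_lt₀ htgt1
  have hinv0 : 0 < (b1 * b2)⁻¹ := inv_pos.mpr ht
  have hc2 : 0 ≤ b1 * b2 - ((b1 * b2)⁻¹) ^ 2 := by nlinarith [hinv, hinv0, htgt1]
  have hc1 : 0 ≤ b1 * ((b1 * b2)⁻¹) ^ 2 * b2 -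
      (b1 ^ 2 * ((b1 * b2)⁻¹) ^ 2 - b1 ^ 2 * b2 ^ 2 + ((b1 * b2)⁻¹) ^ 2 * b2 ^ 2) := by
    have hid : b1 * ((b1 * b2)⁻¹) ^ 2 * b2 -
        (b1 ^ 2 * ((b1 * b2)⁻¹) ^ 2 - b1 ^ 2 * b2 ^ 2 + ((b1 * b2)⁻¹) ^ 2 * b2 ^ 2)
        = ((b1 * b2)⁻¹) ^ 2 * (b1 ^ 4 * b2 ^ 4 + b1 * b2 - b1 ^ 2 - b2 ^ 2) := by
      field_simp
      ring
    rw [hid]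
    exact mul_nonneg (sq_nonneg _) claim2.le
  have hm : 0 ≤ GSm g b1 ((b1 * b2)⁻¹) b2 := by
    unfold GSm
    apply mul_nonneg
    · positivity
    · exact add_nonneg (mul_nonneg hc1 hC1) (mul_nonneg hc2 hC2)
  refine ⟨claim1, claim2, hm, fun hp => ⟨Real.sq_sqrt hp, Real.sq_sqrt hm, ?_, ?_⟩⟩ <;>
    (unfold NSp NSm; ring)
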